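/- If C ∈ O_n, then for every index i with 2i ≥ n, the root codeword s_i is not an element of C^prefix; that is, s_i is not a proper prefix of any codeword of C. -/

import Mathlib

/-- A binary string is a `List Bool` (`false` = 0, `true` = 1).
A palindrome is a string equal to its own reversal. -/
def Palin (w : List Bool) : Prop := w.reverse = w

/-- A symmetric fix-free code: a finite set of binary palindromes in which
no element is a proper prefix of another. -/
def IsSFF (C : Finset (List Bool)) : Prop :=
  (∀ w ∈ C, Palin w) ∧ ∀ u ∈ C, ∀ w ∈ C, u <+: w → u = w

/-- The sorted nondecreasing length sequence of a code. -/
def lenSeq (C : Finset (List Bool)) : List ℕ :=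
  (C.val.map List.length).sort (· ≤ ·)

/-- The `i`-th entry (0-indexed) of the sorted length sequence. -/
def nthLen (C : Finset (List Bool)) (i : ℕ) : ℕ := (lenSeq C).getD i 0

/-- `p` is a probability vector with `p 0 ≥ p 1 ≥ ⋯ ≥ p (n-1) > 0`. -/
def IsProbVec (p : ℕ → ℝ) (n : ℕ) : Prop :=
  (∀ i j, i < n → j < n → i ≤ j → p j ≤ p i) ∧ (∀ i < n, 0 < p i) ∧
    ∑ i ∈ Finset.range n, p i = 1

/-- Expected codeword length of `C` (via its sorted length sequence) under `p`. -/
noncomputable def expLen (p : ℕ → ℝ) (n : ℕ) (C : Finset (List Bool)) : ℝ :=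
  ∑ i ∈ Finset.range n, p i * (nthLen C i : ℝ)

/-- `C` is an optimal symmetric fix-free code with `n` codewords: for some
nonincreasing probability vector, its expected length is minimal among all
symmetric fix-free codes with `n` codewords. -/
def IsOptimal (n : ℕ) (C : Finset (List Bool)) : Prop :=
  IsSFF C ∧ C.card = n ∧ ∃ p : ℕ → ℝ, IsProbVec p n ∧
    ∀ C' : Finset (List Bool), IsSFF C' → C'.card = n →
      expLen p n C ≤ expLen p n C'

/-- Membership in `O_n`: optimal with `n` codewords and not containing the string `1`. -/
def InOpt (n : ℕ) (C : Finset (List Bool)) : Prop :=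
  IsOptimal n C ∧ [true] ∉ C

/-- The root codeword `s i`: `s 1 = 0`, and `s i = 1 0^(i-2) 1` for `i ≥ 2`. -/
def rootWord (i : ℕ) : List Bool :=
  if i = 1 then [false] else true :: (List.replicate (i - 2) false ++ [true])

/-- The root code `R_n = {s_1, …, s_n}`. -/
def rootCode (n : ℕ) : Finset (List Bool) :=
  (Finset.Icc 1 n).image rootWord

/-- `N(σ)`: palindromes `w` such that `σ` is the longest palindrome that is a
proper prefix of `w`. -/
def Nbhd (σ : List Bool) : Set (List Bool) :=
  {w | Palin w ∧ Palin σ ∧ σ <+: w ∧ σ ≠ w ∧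
    ∀ u, Palin u → u <+: w → u ≠ w → u.length ≤ σ.length}

/-- `N_n(σ) = {w ∈ N(σ) : |w| ≤ n}`. -/
def NbhdN (n : ℕ) (σ : List Bool) : Set (List Bool) :=
  {w | w ∈ Nbhd σ ∧ w.length ≤ n}

/-- `S_n`: symmetric fix-free codes with `n` codewords, not containing `1`,
all of whose codewords have length at most `n`. -/
def SCodes (n : ℕ) : Set (Finset (List Bool)) :=
  {C | IsSFF C ∧ C.card = n ∧ [true] ∉ C ∧ ∀ w ∈ C, w.length ≤ n}

/-- The relation `S →^σ T`: `σ ∈ S` and `T ⊆ (S ∪ N_n(σ)) \ {σ}`. -/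
def ArrowTo (n : ℕ) (σ : List Bool) (S T : Finset (List Bool)) : Prop :=
  σ ∈ S ∧ ∀ w ∈ T, (w ∈ S ∨ w ∈ NbhdN n σ) ∧ w ≠ σ

/-- The relation `S ⇒^σ T`: `σ ∈ S`, `T ⊆ (S ∪ N_n(σ)) \ {σ}`, `|T| = n`, and
every omitted element of `(S ∪ N_n(σ)) \ {σ}` is at least as long as every
element of `T` (so `T` consists of `n` shortest words of `(S ∪ N_n(σ)) \ {σ}`). -/
def StepTo (n : ℕ) (σ : List Bool) (S T : Finset (List Bool)) : Prop :=
  ArrowTo n σ S T ∧ T.card = n ∧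
  ∀ w : List Bool, (w ∈ S ∨ w ∈ NbhdN n σ) → w ≠ σ → w ∉ T →
    ∀ v ∈ T, v.length ≤ w.length

/-- A `⇒`-transformation `R_n = S⁰ ⇒ S¹ ⇒ ⋯ ⇒ Sᵐ = C` of codes in `S_n`. -/
def IsTransform (n m : ℕ) (S : ℕ → Finset (List Bool)) (C : Finset (List Bool)) : Prop :=
  S 0 = rootCode n ∧ S m = C ∧ (∀ i ≤ m, S i ∈ SCodes n) ∧
  ∀ i < m, ∃ σ, StepTo n σ (S i) (S (i + 1))

/-- A `⇒`-transformation with the witness `π i` used for the step `S i ⇒ S (i+1)`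
(so `π 0, …, π (m-1)` are `π_1, …, π_m`). -/
def IsTransformW (n m : ℕ) (S : ℕ → Finset (List Bool)) (π : ℕ → List Bool)
    (C : Finset (List Bool)) : Prop :=
  S 0 = rootCode n ∧ S m = C ∧ (∀ i ≤ m, S i ∈ SCodes n) ∧
  ∀ i < m, StepTo n (π i) (S i) (S (i + 1))

/-- `C^prefix`: palindromes other than `1` that are proper prefixes of some codeword of `C`. -/
def prefixSet (C : Finset (List Bool)) : Set (List Bool) :=
  {u | Palin u ∧ u ≠ [true] ∧ ∃ w ∈ C, u <+: w ∧ u ≠ w}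

/-- Maximum codeword length of a code. -/
def maxLen (C : Finset (List Bool)) : ℕ := C.sup List.length

/-- Bitwise complement of a binary string. -/
def bcomp (w : List Bool) : List Bool := w.map (fun b => !b)

/-- `Dominates n l l'`: the sorted nondecreasing sequence `l` dominates `l'`,
i.e. `Σ_{j=1}^i l'_j ≥ Σ_{j=1}^i l_j` for every `i ∈ {1,…,n}`. -/
def Dominates (n : ℕ) (l l' : ℕ → ℕ) : Prop :=
  ∀ i ≤ n, ∑ j ∈ Finset.range i, l j ≤ ∑ j ∈ Finset.range i, l' j

/-- Membership in `D_n`: codes in `S_n` whose length sequence is not dominated by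
the length sequence of any code in `S_n` having a different length sequence. -/
def InD (n : ℕ) (S : Finset (List Bool)) : Prop :=
  S ∈ SCodes n ∧ ∀ C ∈ SCodes n, lenSeq C ≠ lenSeq S →
    ¬ Dominates n (nthLen C) (nthLen S)

/-- If `C ∈ O_n`, then for every index `i` with `1 ≤ i ≤ n` and
`2i ≥ n`, the root codeword `s_i` is not in `C^prefix`, i.e. `s_i` is not a
proper prefix of any codeword of `C`. -/
lemma rootWord_eq {j : ℕ} (hj : 2 ≤ j) :
    rootWord j = true :: (List.replicate (j - 2) false ++ [true]) :=
  if_neg (by omega)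

lemma length_rootWord {j : ℕ} (hj : 1 ≤ j) : (rootWord j).length = j := by
  unfold rootWord; split
  · simp; omega
  · simp; omega

lemma palin_rootWord (j : ℕ) : Palin (rootWord j) := by
  unfold Palin rootWord
  split
  · rfl
  · simp [List.reverse_cons, List.reverse_append, List.reverse_replicate]

lemma rootWord_ne_one {j : ℕ} (hj : 1 ≤ j) : rootWord j ≠ [true] := by
  unfold rootWord; split
  · simp
  · intro h
    have := congrArg List.length h
    simp at this

lemma rootWord_ne_nil {j : ℕ} (hj : 1 ≤ j) : rootWord j ≠ [] := by
  intro h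
  have := congrArg List.length h
  rw [length_rootWord hj] at this
  simp at this; omega

lemma rootWord_getElem_zero {j : ℕ} (hj : 2 ≤ j) (h : 0 < (rootWord j).length) :
    (rootWord j)[0] = true := by
  rw [List.getElem_of_eq (rootWord_eq hj) h]
  rfl

lemma rootWord_getElem_mid {j k : ℕ} (hj : 2 ≤ j) (h1 : 1 ≤ k) (h2 : k ≤ j - 2)
    (h : k < (rootWord j).length) : (rootWord j)[k] = false := by
  rw [List.getElem_of_eq (rootWord_eq hj) h]
  rcases Nat.exists_eq_add_of_le h1 with ⟨k', rfl⟩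
  simp only [show 1 + k' = k' + 1 from by omega]
  rw [List.getElem_cons_succ]
  rw [List.getElem_append_left (by simp; omega)]
  simp

lemma rootWord_getElem_last {j : ℕ} (hj : 2 ≤ j) (h : j - 1 < (rootWord j).length) :
    (rootWord j)[j-1] = true := by
  rw [List.getElem_of_eq (rootWord_eq hj) h]
  simp only [show j - 1 = (j - 2) + 1 from by omega]
  rw [List.getElem_cons_succ]
  rw [List.getElem_append_right (by simp)]
  simp

lemma palin_getElem_symm {u : List Bool} (hu : Palin u) {k : ℕ} (hk : k < u.length) :
    u[k] = u[u.length - 1 - k]'(by omega) := by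
  rw [List.getElem_of_eq hu.symm hk, List.getElem_reverse]

lemma pal_suffix {w u : List Bool} (hw : Palin w) (hu : Palin u) (h : u <+: w) :
    u <:+ w := by
  rcases h with ⟨t, rfl⟩
  refine ⟨t.reverse, ?_⟩
  conv_rhs => rw [← hw]
  rw [List.reverse_append, hu]

lemma palin_prefix_rootWord {j : ℕ} (hj : 1 ≤ j) {u : List Bool} (hu : u <+: rootWord j)
    (hpu : Palin u) : u = [] ∨ u = [true] ∨ u = rootWord j := by
  rcases Nat.lt_or_ge j 2 with hj2 | hj2
  · -- j = 1
    have hj1 : j = 1 := by omega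
    subst hj1
    have : rootWord 1 = [false] := rfl
    rw [this] at hu ⊢
    rcases hu with ⟨t, ht⟩
    rcases u with _ | ⟨a, u'⟩
    · left; rfl
    · right; right
      rcases u' with _ | _
      · cases t with
        | nil => simpa using ht
        | cons b t' => simp at ht
      · simp at ht
  · -- j ≥ 2
    have hlen : u.length ≤ j := by
      have := hu.length_le
      rwa [length_rootWord (by omega)] at this
    rcases Nat.eq_or_lt_of_le hlen with heq | hlt
    · right; right
      exact hu.eq_of_length (by rw [length_rootWord (by omega)]; omega)
    · rcases Nat.eq_zero_or_pos u.length with h0 | hpos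
      · left; exact List.length_eq_zero_iff.mp h0
      rcases Nat.lt_or_ge u.length 2 with h1 | h2
      · right; left
        have hu1 : u.length = 1 := by omega
        have h0 : u[0]'(by omega) = (rootWord j)[0]'(by rw [length_rootWord (by omega)]; omega) :=
          hu.getElem (by omega)
        rw [rootWord_getElem_zero hj2] at h0
        rcases u with _ | ⟨a, u'⟩
        · simp at hu1
        · rcases u' with _ | _
          · simp at h0; rw [h0]
          · simp at hu1
      · -- 2 ≤ |u| ≤ j-1 : contradiction
        exfalso
        have hk : u.length - 1 < u.length := by omega
        have e1 : u[u.length - 1]'hk = (rootWord j)[u.length - 1]'(by rw [length_rootWord (by omega)]; omega) :=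
          hu.getElem hk
        have e2 : (rootWord j)[u.length - 1]'(by rw [length_rootWord (by omega)]; omega) = false :=
          rootWord_getElem_mid hj2 (by omega) (by omega) _
        have e3 : u[u.length - 1]'hk = u[0]'(by omega) := by
          have := palin_getElem_symm hpu (k := 0) (by omega)
          simp at this
          rw [this]
        have e4 : u[0]'(by omega) = (rootWord j)[0]'(by rw [length_rootWord (by omega)]; omega) :=
          hu.getElem (by omega)
        rw [rootWord_getElem_zero hj2] at e4
        rw [e3, e4] at e1
        rw [e2] at e1
        exact Bool.noConfusion e1

lemma rootWord_not_prefix_rootWord {j k : ℕ} (hj : 1 ≤ j) (hk : 1 ≤ k) (hjk : j ≠ k) :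
    ¬ rootWord j <+: rootWord k := by
  intro h
  rcases palin_prefix_rootWord hk h (palin_rootWord j) with h1 | h1 | h1
  · exact rootWord_ne_nil hj h1
  · exact rootWord_ne_one hj h1
  · have := congrArg List.length h1
    rw [length_rootWord hj, length_rootWord hk] at this
    exact hjk this

/-- Any palindromic proper extension of `rootWord i` has length ≥ 2i-1. -/
lemma ext_length_ge {i : ℕ} (hi : 1 ≤ i) {w : List Bool} (hw : Palin w)
    (hpre : rootWord i <+: w) (hne : rootWord i ≠ w) : 2 * i - 1 ≤ w.length := by
  have hlen : i < w.length := by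
    rcases Nat.eq_or_lt_of_le hpre.length_le with h | h
    · exact absurd (hpre.eq_of_length h) hne
    · rwa [length_rootWord hi] at h
  rcases Nat.lt_or_ge i 2 with hi2 | hi2
  · omega
  by_contra hcon
  push_neg at hcon
  -- i+1 ≤ |w| ≤ 2i-2
  have hsuf : rootWord i <:+ w := pal_suffix hw (palin_rootWord i) hpre
  rcases hsuf with ⟨r, hr⟩
  have hrlen : r.length = w.length - i := by
    have := congrArg List.length hr
    simp [length_rootWord (by omega : 1 ≤ i)] at this
    omega
  set pos := w.length - i with hpos
  have hpos1 : 1 ≤ pos := by omega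
  have hpos2 : pos ≤ i - 2 := by omega
  have hposw : pos < w.length := by omega
  -- value via suffix
  have e1 : w[pos]'hposw = true := by
    rw [List.getElem_of_eq hr.symm hposw]
    rw [List.getElem_append_right (by omega)]
    have : pos - r.length = 0 := by omega
    simp only [this]
    exact rootWord_getElem_zero hi2 (by rw [length_rootWord (by omega)]; omega)
  -- value via prefix
  have e2 : w[pos]'hposw = false := by
    rw [← hpre.getElem (by rw [length_rootWord (by omega)]; omega)]
    exact rootWord_getElem_mid hi2 hpos1 hpos2 _
  rw [e1] at e2
  exact Bool.noConfusion e2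

/-- Two palindromes of equal length sharing the first half coincide. -/
lemma palin_eq_of_take {v w : List Bool} (hv : Palin v) (hw : Palin w)
    (hlen : v.length = w.length) {k : ℕ} (hk : v.length ≤ 2 * k)
    (htake : v.take k = w.take k) : v = w := by
  have key : ∀ u : List Bool, Palin u → u.length ≤ 2 * k →
      u = u.take k ++ (List.take (u.length - k) (u.take k)).reverse := by
    intro u hu hul
    have h1 : (List.drop k u).reverse = List.take (u.length - k) u := by
      rw [List.reverse_drop, hu]
    have h2 : List.drop k u = (List.take (u.length - k) u).reverse := by
      rw [← h1, List.reverse_reverse]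
    have h3 : List.take (u.length - k) (u.take k) = List.take (u.length - k) u := by
      rw [List.take_take, Nat.min_eq_left (by omega)]
    rw [h3, ← h2]
    exact (List.take_append_drop k u).symm
  rw [key v hv hk, key w hw (hlen ▸ hk), htake, hlen]

lemma ext_unique {i : ℕ} (hi : 1 ≤ i) {w w' : List Bool} (hw : Palin w) (hw' : Palin w')
    (hp : rootWord i <+: w) (hp' : rootWord i <+: w') (hne : rootWord i ≠ w)
    (hne' : rootWord i ≠ w') (hl : w.length < 2 * i) (hl' : w'.length < 2 * i) : w = w' := by
  have hgt : i < w.length := by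
    rcases Nat.eq_or_lt_of_le hp.length_le with h | h
    · exact absurd (hp.eq_of_length h) hne
    · rwa [length_rootWord hi] at h
  have hgt' : i < w'.length := by
    rcases Nat.eq_or_lt_of_le hp'.length_le with h | h
    · exact absurd (hp'.eq_of_length h) hne'
    · rwa [length_rootWord hi] at h
  have h1 := ext_length_ge hi hw hp hne
  have h2 := ext_length_ge hi hw' hp' hne'
  have hlen : w.length = w'.length := by omega
  refine palin_eq_of_take hw hw' hlen (k := i) (by omega) ?_
  have t1 : rootWord i = List.take i w := by
    have := List.prefix_iff_eq_take.mp hp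
    rwa [length_rootWord hi] at this
  have t2 : rootWord i = List.take i w' := by
    have := List.prefix_iff_eq_take.mp hp'
    rwa [length_rootWord hi] at this
  rw [← t1, ← t2]

lemma rel_le_refl (s : Multiset ℕ) : Multiset.Rel (· ≤ ·) s s := by
  induction s using Multiset.induction_on with
  | empty => exact Multiset.Rel.zero
  | cons a s ih => exact Multiset.Rel.cons le_rfl ih

lemma rel_le_of_sep {s t : Multiset ℕ} (c : ℕ) (hcard : Multiset.card s = Multiset.card t)
    (hs : ∀ x ∈ s, x ≤ c) (ht : ∀ y ∈ t, c ≤ y) : Multiset.Rel (· ≤ ·) s t := by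
  induction s using Multiset.induction_on generalizing t with
  | empty =>
    have : t = 0 := by
      rw [← Multiset.card_eq_zero, ← hcard]; simp
    rw [this]; exact Multiset.Rel.zero
  | cons a s ih =>
    have htne : t ≠ 0 := by
      intro h; rw [h] at hcard; simp at hcard
    obtain ⟨b, hb⟩ := Multiset.exists_mem_of_ne_zero htne
    have ht' : t = b ::ₘ t.erase b := (Multiset.cons_erase hb).symm
    rw [ht']
    refine Multiset.Rel.cons (le_trans (hs a (by simp)) (ht b hb)) (ih ?_ ?_ ?_)
    · rw [ht'] at hcard; simp at hcard ⊢; omega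
    · intro x hx; exact hs x (by simp [hx])
    · intro y hy; exact ht y (Multiset.mem_of_mem_erase hy)

lemma relLe_filter_card {s t : Multiset ℕ} (h : Multiset.Rel (· ≤ ·) s t) (v : ℕ) :
    (t.filter (· ≤ v)).card ≤ (s.filter (· ≤ v)).card := by
  induction h with
  | zero => simp
  | @cons a b s' t' hab _ ih =>
    rw [Multiset.filter_cons, Multiset.filter_cons]
    by_cases hbv : b ≤ v
    · have hav : a ≤ v := le_trans hab hbv
      rw [if_pos hav, if_pos hbv]
      simp only [Multiset.card_add, Multiset.card_singleton]
      omega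
    · rw [if_neg hbv, zero_add]
      rcases le_or_gt a v with hav | hav
      · rw [if_pos hav]; simp; omega
      · rw [if_neg (by omega)]; simpa using ih

lemma sorted_filter_card_ge {L : List ℕ} (hL : L.Pairwise (· ≤ ·)) {j : ℕ} (hj : j < L.length) :
    j + 1 ≤ (L.filter (fun x => decide (x ≤ L[j]))).length := by
  have hsub : List.Sublist (L.take (j+1)) L := List.take_sublist _ _
  have hall : ∀ x ∈ L.take (j+1), x ≤ L[j] := by
    intro x hx
    obtain ⟨k, hk, hkx⟩ := List.mem_iff_getElem.mp hx
    have hk' : k < j + 1 := by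
      have := hk; rw [List.length_take] at this; omega
    rw [List.getElem_take] at hkx
    rcases Nat.eq_or_lt_of_le (Nat.lt_succ_iff.mp hk') with he | hlt
    · subst hkx; simp only [he]; exact le_rfl
    · subst hkx
      exact List.pairwise_iff_getElem.mp hL k j (by omega) hj hlt
  have : (L.take (j+1)).filter (fun x => decide (x ≤ L[j])) = L.take (j+1) := by
    apply List.filter_eq_self.mpr
    intro x hx; simpa using hall x hx
  calc j + 1 = (L.take (j+1)).length := by rw [List.length_take]; omega
  _ = ((L.take (j+1)).filter (fun x => decide (x ≤ L[j]))).length := by rw [this]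
  _ ≤ _ := (hsub.filter _).length_le

lemma sorted_getElem_le_of_filter {L : List ℕ} (hL : L.Pairwise (· ≤ ·)) {j v : ℕ}
    (hj : j < L.length) (hf : j + 1 ≤ (L.filter (fun x => decide (x ≤ v))).length) :
    L[j] ≤ v := by
  by_contra hcon
  push_neg at hcon
  have hsplit : L = L.take j ++ L.drop j := (List.take_append_drop j L).symm
  have hdrop : (L.drop j).filter (fun x => decide (x ≤ v)) = [] := by
    apply List.filter_eq_nil_iff.mpr
    intro x hx
    obtain ⟨k, hk, hkx⟩ := List.mem_iff_getElem.mp hx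
    rw [List.getElem_drop] at hkx
    have hjk : j ≤ j + k := Nat.le_add_right _ _
    have hle : L[j] ≤ L[j+k]'(by rw [List.length_drop] at hk; omega) := by
      rcases Nat.eq_or_lt_of_le hjk with he | hlt
      · simp only [← he]; exact le_rfl
      · exact List.pairwise_iff_getElem.mp hL j (j+k) hj (by rw [List.length_drop] at hk; omega) hlt
    subst hkx
    simp only [decide_eq_true_eq]
    omega
  have : (L.filter (fun x => decide (x ≤ v))).length ≤ j := by
    conv_lhs => rw [hsplit]
    rw [List.filter_append, List.length_append, hdrop]
    simp only [List.length_nil, Nat.add_zero]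
    calc ((L.take j).filter _).length ≤ (L.take j).length := List.length_filter_le _ _
    _ ≤ j := by rw [List.length_take]; omega
  omega

lemma sort_getD_mono {s t : Multiset ℕ} (h : Multiset.Rel (· ≤ ·) s t) (j : ℕ) :
    (s.sort (· ≤ ·)).getD j 0 ≤ (t.sort (· ≤ ·)).getD j 0 := by
  have hcard := Multiset.card_eq_card_of_rel h
  set Ls := s.sort (· ≤ ·) with hLs
  set Lt := t.sort (· ≤ ·) with hLt
  have hlens : Ls.length = Multiset.card s := Multiset.length_sort _
  have hlent : Lt.length = Multiset.card t := Multiset.length_sort _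
  rcases Nat.lt_or_ge j Ls.length with hj | hj
  · have hjt : j < Lt.length := by omega
    rw [List.getD_eq_getElem _ _ hj, List.getD_eq_getElem _ _ hjt]
    set v := Lt[j] with hv
    -- count in t
    have h1 : j + 1 ≤ (Lt.filter (fun x => decide (x ≤ v))).length :=
      sorted_filter_card_ge (Multiset.pairwise_sort _ _) hjt
    -- transfer to multiset filters
    have e1 : (Lt.filter (fun x => decide (x ≤ v))).length
        = Multiset.card (t.filter (· ≤ v)) := by
      rw [← Multiset.sort_eq t (· ≤ ·), ← hLt]
      simp [Multiset.filter_coe]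
    have e2 : (Ls.filter (fun x => decide (x ≤ v))).length
        = Multiset.card (s.filter (· ≤ v)) := by
      rw [← Multiset.sort_eq s (· ≤ ·), ← hLs]
      simp [Multiset.filter_coe]
    have h2 : j + 1 ≤ (Ls.filter (fun x => decide (x ≤ v))).length := by
      rw [e2]
      calc j + 1 ≤ _ := h1
      _ = _ := e1
      _ ≤ _ := relLe_filter_card h v
    exact sorted_getElem_le_of_filter (Multiset.pairwise_sort _ _) hj h2
  · rw [List.getD_eq_default _ _ hj, List.getD_eq_default _ _ (by omega)]

lemma sum_getD_range (L : List ℕ) : ∑ j ∈ Finset.range L.length, L.getD j 0 = L.sum := by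
  induction L with
  | nil => simp
  | cons a tl ih =>
    rw [List.length_cons, Finset.sum_range_succ', List.sum_cons]
    simp only [List.getD_cons_succ, List.getD_cons_zero]
    rw [ih, Nat.add_comm]

theorem root_word_not_prefix (n : ℕ) (C : Finset (List Bool)) (hC : InOpt n C)
    (i : ℕ) (hi1 : 1 ≤ i) (hin : i ≤ n) (h2i : n ≤ 2 * i) :
    rootWord i ∉ prefixSet C := by
  classical
  intro hmem
  obtain ⟨⟨hSFF, hcard, p, hp, hopt⟩, hone⟩ := hC
  obtain ⟨hpalS, hneTrue, w0', hw0'C, hpre0, hne0⟩ := hmem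
  set si := rootWord i with hsi
  set W : Finset (List Bool) := C.filter (fun w => si <+: w ∧ si ≠ w) with hW
  set m := W.card with hm
  have hWsub : W ⊆ C := Finset.filter_subset _ _
  have hw0'W : w0' ∈ W := by
    rw [hW, Finset.mem_filter]
    exact ⟨hw0'C, hpre0, hne0⟩
  have hm1 : 1 ≤ m := Finset.card_pos.mpr ⟨w0', hw0'W⟩
  have hmn : m ≤ n := hcard ▸ Finset.card_le_card hWsub
  have hsiC : si ∉ C := by
    intro h
    exact hne0 (hSFF.2 si h w0' hw0'C hpre0)
  have hWlen : ∀ w ∈ W, i + 1 ≤ w.length := by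
    intro w hw
    rw [hW, Finset.mem_filter] at hw
    rcases Nat.eq_or_lt_of_le hw.2.1.length_le with h | h
    · exact absurd (hw.2.1.eq_of_length h) hw.2.2
    · rw [length_rootWord hi1] at h; omega
  have hWlen2 : ∀ w ∈ W, 2 * i - 1 ≤ w.length := by
    intro w hw
    have hwf := Finset.mem_filter.mp hw
    exact ext_length_ge hi1 (hSFF.1 w hwf.1) hwf.2.1 hwf.2.2
  have hWuniq : ∀ w ∈ W, ∀ w' ∈ W, w.length < 2*i → w'.length < 2*i → w = w' := by
    intro w hw w' hw' h1 h2
    have hwf := Finset.mem_filter.mp hw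
    have hwf' := Finset.mem_filter.mp hw'
    exact ext_unique hi1 (hSFF.1 w hwf.1) (hSFF.1 w' hwf'.1) hwf.2.1 hwf'.2.1
      hwf.2.2 hwf'.2.2 h1 h2
  -- fresh indices
  set Fresh : Finset ℕ :=
    (Finset.Icc 1 (2*i)).filter (fun j => ∀ w ∈ C, ¬ (rootWord j <+: w)) with hFresh
  set NotFresh : Finset ℕ :=
    (Finset.Icc 1 (2*i)).filter (fun j => ¬ ∀ w ∈ C, ¬ (rootWord j <+: w)) with hNotFresh
  have hcards : Fresh.card + NotFresh.card = 2*i := by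
    rw [hFresh, hNotFresh, Finset.card_filter_add_card_filter_not, Nat.card_Icc]
    omega
  have hex : ∀ j : ℕ, ∃ w : List Bool, j ∈ NotFresh → w ∈ C ∧ rootWord j <+: w := by
    intro j
    by_cases h : j ∈ NotFresh
    · rw [hNotFresh, Finset.mem_filter] at h
      push_neg at h
      obtain ⟨w, hw1, hw2⟩ := h.2
      exact ⟨w, fun _ => ⟨hw1, hw2⟩⟩
    · exact ⟨[], fun h' => absurd h' h⟩
  choose ψ hψ using hex
  have hNFbound : ∀ j ∈ NotFresh, 1 ≤ j := by
    intro j hj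
    rw [hNotFresh, Finset.mem_filter, Finset.mem_Icc] at hj
    exact hj.1.1
  have hinj : (NotFresh.erase i).card ≤ (C \ W).card := by
    apply Finset.card_le_card_of_injOn ψ
    · intro j hj
      have hjne := Finset.ne_of_mem_erase hj
      have hjNF := Finset.mem_of_mem_erase hj
      obtain ⟨hψC, hψpre⟩ := hψ j hjNF
      rw [Finset.mem_coe, Finset.mem_sdiff]
      refine ⟨hψC, ?_⟩
      intro hmemW
      have hsipre := (Finset.mem_filter.mp hmemW).2.1
      -- si and rootWord j both prefixes of ψ j : comparable
      rcases Nat.le_total (rootWord j).length si.length with hle | hle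
      · exact rootWord_not_prefix_rootWord (hNFbound j hjNF) hi1 hjne
          (List.prefix_of_prefix_length_le hψpre hsipre hle)
      · exact rootWord_not_prefix_rootWord hi1 (hNFbound j hjNF) (Ne.symm hjne)
          (List.prefix_of_prefix_length_le hsipre hψpre hle)
    · intro j hj j' hj' heq
      have hj1 : j ∈ NotFresh := Finset.mem_of_mem_erase (Finset.mem_coe.mp hj)
      have hj2 : j' ∈ NotFresh := Finset.mem_of_mem_erase (Finset.mem_coe.mp hj')
      have h1 := (hψ j hj1).2
      have h2 := (hψ j' hj2).2
      rw [heq] at h1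
      by_contra hne
      rcases Nat.le_total (rootWord j).length (rootWord j').length with hle | hle
      · exact rootWord_not_prefix_rootWord (hNFbound j hj1) (hNFbound j' hj2) hne
          (List.prefix_of_prefix_length_le h1 h2 hle)
      · exact rootWord_not_prefix_rootWord (hNFbound j' hj2) (hNFbound j hj1) (Ne.symm hne)
          (List.prefix_of_prefix_length_le h2 h1 hle)
  have hiNF : i ∈ NotFresh := by
    rw [hNotFresh, Finset.mem_filter, Finset.mem_Icc]
    refine ⟨⟨hi1, by omega⟩, ?_⟩
    push_neg
    exact ⟨w0', hw0'C, hpre0⟩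
  have hCWcard : (C \ W).card = n - m := by
    rw [Finset.card_sdiff_of_subset hWsub, hcard]
  have hFreshCard : m - 1 ≤ Fresh.card := by
    have h1 : (NotFresh.erase i).card = NotFresh.card - 1 := Finset.card_erase_of_mem hiNF
    have h2 : 1 ≤ NotFresh.card := Finset.card_pos.mpr ⟨i, hiNF⟩
    omega
  obtain ⟨X, hXsub, hXcard⟩ := Finset.exists_subset_card_eq hFreshCard
  have hiFresh : i ∉ Fresh := by
    rw [hFresh, Finset.mem_filter]
    rintro ⟨-, h⟩
    exact h w0' hw0'C hpre0
  have hiX : i ∉ X := fun h => hiFresh (hXsub h)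
  have hXprop : ∀ j ∈ X, (1 ≤ j ∧ j ≤ 2*i) ∧ ∀ w ∈ C, ¬ (rootWord j <+: w) := by
    intro j hj
    have := hXsub hj
    rw [hFresh, Finset.mem_filter, Finset.mem_Icc] at this
    exact this
  -- the new code
  set NewIdx : Finset ℕ := insert i X with hNewIdx
  have hNewIdxCard : NewIdx.card = m := by
    rw [hNewIdx, Finset.card_insert_of_notMem hiX, hXcard]
    omega
  have hNewIdxBound : ∀ j ∈ NewIdx, 1 ≤ j ∧ j ≤ 2*i := by
    intro j hj
    rw [hNewIdx, Finset.mem_insert] at hj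
    rcases hj with rfl | hj
    · exact ⟨hi1, by omega⟩
    · exact (hXprop j hj).1
  have hRWinj : Set.InjOn rootWord ↑NewIdx := by
    intro j hj j' hj' heq
    have e1 := length_rootWord (hNewIdxBound j (Finset.mem_coe.mp hj)).1
    have e2 := length_rootWord (hNewIdxBound j' (Finset.mem_coe.mp hj')).1
    rw [← e1, ← e2, heq]
  set NI : Finset (List Bool) := NewIdx.image rootWord with hNI
  have hNIval : NI.val = NewIdx.val.map rootWord := Finset.image_val_of_injOn hRWinj
  have hNIcard : NI.card = m := by
    rw [Finset.card_image_of_injOn hRWinj, hNewIdxCard]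
  -- members of NI viewed
  have hNImem : ∀ x ∈ NI, ∃ j ∈ NewIdx, rootWord j = x := by
    intro x hx
    rw [hNI, Finset.mem_image] at hx
    obtain ⟨j, hj, hjx⟩ := hx
    exact ⟨j, hj, hjx⟩
  have hdisj : Disjoint (C \ W) NI := by
    rw [Finset.disjoint_right]
    intro x hxNI hxCW
    obtain ⟨j, hj, rfl⟩ := hNImem x hxNI
    have hxC : rootWord j ∈ C := (Finset.mem_sdiff.mp hxCW).1
    rw [hNewIdx, Finset.mem_insert] at hj
    rcases hj with rfl | hj
    · exact hsiC hxC
    · exact (hXprop j hj).2 _ hxC (List.prefix_refl _)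
  set C' : Finset (List Bool) := (C \ W).disjUnion NI hdisj with hC'
  have hC'card : C'.card = n := by
    rw [hC', Finset.card_disjUnion, hCWcard, hNIcard]
    omega
  -- C' is SFF
  have hC'SFF : IsSFF C' := by
    constructor
    · intro w hw
      rw [hC', Finset.mem_disjUnion] at hw
      rcases hw with hw | hw
      · exact hSFF.1 w (Finset.mem_sdiff.mp hw).1
      · obtain ⟨j, hj, rfl⟩ := hNImem w hw
        exact palin_rootWord j
    · intro u hu w hw hpre
      rw [hC', Finset.mem_disjUnion] at hu hw
      rcases hu with hu | hu <;> rcases hw with hw | hw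
      · exact hSFF.2 u (Finset.mem_sdiff.mp hu).1 w (Finset.mem_sdiff.mp hw).1 hpre
      · -- u ∈ C \ W, w = rootWord j
        obtain ⟨j, hj, rfl⟩ := hNImem w hw
        have huC := (Finset.mem_sdiff.mp hu).1
        have huW := (Finset.mem_sdiff.mp hu).2
        have hj1 : 1 ≤ j := (hNewIdxBound j hj).1
        rcases palin_prefix_rootWord hj1 hpre (hSFF.1 u huC) with h | h | h
        · -- u = [] impossible: [] would be a proper prefix of w0'
          exfalso
          subst h
          have : ([] : List Bool) = w0' := hSFF.2 [] huC w0' hw0'C (List.nil_prefix)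
          have hl := hWlen w0' hw0'W
          rw [← this] at hl
          simp at hl
        · exact absurd (h ▸ huC) hone
        · exact h
      · -- u = rootWord j, w ∈ C \ W
        obtain ⟨j, hj, rfl⟩ := hNImem u hu
        have hwC := (Finset.mem_sdiff.mp hw).1
        have hwW := (Finset.mem_sdiff.mp hw).2
        exfalso
        rw [hNewIdx, Finset.mem_insert] at hj
        rcases hj with rfl | hj
        · -- si <+: w with w ∈ C: then w ∈ W (w ≠ si since si ∉ C)
          apply hwW
          rw [hW, Finset.mem_filter]
          refine ⟨hwC, hpre, ?_⟩
          intro he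
          exact hsiC (he ▸ hwC)
        · exact (hXprop j hj).2 w hwC hpre
      · obtain ⟨j, hj, rfl⟩ := hNImem u hu
        obtain ⟨k, hk, rfl⟩ := hNImem w hw
        by_cases hjk : j = k
        · rw [hjk]
        · exact absurd hpre
            (rootWord_not_prefix_rootWord (hNewIdxBound j hj).1 (hNewIdxBound k hk).1 hjk)
  -- choose a distinguished element w0 of W
  have hw0spec : ∃ w0 ∈ W, ∀ w ∈ W.erase w0, 2*i ≤ w.length := by
    by_cases hsmall : ∃ w ∈ W, w.length < 2*i
    · obtain ⟨w0, hw0W, hw0len⟩ := hsmall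
      refine ⟨w0, hw0W, ?_⟩
      intro w hw
      by_contra hcon
      push_neg at hcon
      exact (Finset.ne_of_mem_erase hw)
        (hWuniq w (Finset.mem_of_mem_erase hw) w0 hw0W hcon hw0len)
    · push_neg at hsmall
      exact ⟨w0', hw0'W, fun w hw => hsmall w (Finset.mem_of_mem_erase hw)⟩
  obtain ⟨w0, hw0W, hrest⟩ := hw0spec
  -- multiset decompositions
  have hCval : C.val = (C \ W).val + W.val := by
    have h1 : (C \ W) ∪ W = C := Finset.sdiff_union_of_subset hWsub
    calc C.val = ((C \ W) ∪ W).val := by rw [h1]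
    _ = ((C \ W).disjUnion W Finset.sdiff_disjoint).val := by
        rw [Finset.disjUnion_eq_union]
    _ = (C \ W).val + W.val := rfl
  have hC'val : C'.val = (C \ W).val + NI.val := rfl
  set A : Multiset ℕ := (C \ W).val.map List.length with hA
  set LW : Multiset ℕ := W.val.map List.length with hLW
  set LN : Multiset ℕ := NI.val.map List.length with hLN
  have hms : C.val.map List.length = A + LW := by rw [hCval, Multiset.map_add]
  have hms' : C'.val.map List.length = A + LN := by rw [hC'val, Multiset.map_add]
  -- decompose W and NewIdx
  have hWdec : W.val = w0 ::ₘ (W.erase w0).val := by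
    rw [Finset.erase_val, Multiset.cons_erase (by exact hw0W)]
  have hNIdec : NewIdx.val = i ::ₘ X.val := Finset.insert_val_of_notMem hiX
  have hXcard' : Multiset.card (X.val.map (fun j => (rootWord j).length)) = m - 1 := by
    rw [Multiset.card_map]
    exact hXcard
  have hWecard : Multiset.card ((W.erase w0).val.map List.length) = m - 1 := by
    rw [Multiset.card_map, ← Finset.card_def, Finset.card_erase_of_mem hw0W]
  -- the relation between length multisets
  have hRelNW : Multiset.Rel (· ≤ ·) LN LW := by
    rw [hLN, hLW, hNIval, hNIdec, hWdec]
    simp only [Multiset.map_cons, Multiset.map_map]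
    refine Multiset.Rel.cons ?_ ?_
    · have hwl := hWlen w0 hw0W
      exact le_trans (le_of_eq (length_rootWord hi1)) (by omega : i ≤ w0.length)
    · apply rel_le_of_sep (c := 2*i)
      · rw [Multiset.card_map, Multiset.card_map]
        have e1 : Multiset.card X.val = X.card := rfl
        have e2 : Multiset.card (W.erase w0).val = (W.erase w0).card := rfl
        rw [e1, e2, hXcard, Finset.card_erase_of_mem hw0W]
      · intro x hx
        obtain ⟨j, hj, rfl⟩ := Multiset.mem_map.mp hx
        have hj' : j ∈ X := Finset.mem_def.mpr hj
        simp only [Function.comp_apply]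
        rw [length_rootWord (hXprop j hj').1.1]
        exact (hXprop j hj').1.2
      · intro y hy
        obtain ⟨w, hw, rfl⟩ := Multiset.mem_map.mp hy
        exact hrest w (Finset.mem_def.mpr hw)
  have hRel : Multiset.Rel (· ≤ ·) (C'.val.map List.length) (C.val.map List.length) := by
    rw [hms, hms']
    exact Multiset.Rel.add (rel_le_refl A) hRelNW
  have hpoint : ∀ j, nthLen C' j ≤ nthLen C j := fun j => sort_getD_mono hRel j
  -- strict sum inequality
  have hLNsum : LN.sum ≤ i + (m-1) * (2*i) := by
    rw [hLN, hNIval, hNIdec]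
    simp only [Multiset.map_cons, Multiset.map_map, Multiset.sum_cons]
    have e : (List.length ∘ rootWord) i = i := length_rootWord hi1
    refine Nat.add_le_add (le_of_eq e) ?_
    have hb : (Multiset.map (List.length ∘ rootWord) X.val).sum
        ≤ (Multiset.map (fun _ => 2*i) X.val).sum := by
      apply Multiset.sum_map_le_sum_map
      intro j hj
      have hj' : j ∈ X := Finset.mem_def.mpr hj
      exact le_trans (le_of_eq (length_rootWord (hXprop j hj').1.1)) (hXprop j hj').1.2
    calc (Multiset.map (List.length ∘ rootWord) X.val).sum ≤ _ := hb
    _ = (m-1) * (2*i) := by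
        rw [Multiset.map_const', Multiset.sum_replicate]
        have e1 : Multiset.card X.val = X.card := rfl
        rw [e1, hXcard, smul_eq_mul]
  have hLWsum : (i+1) + (m-1) * (2*i) ≤ LW.sum := by
    rw [hLW, hWdec, Multiset.map_cons, Multiset.sum_cons]
    refine Nat.add_le_add (hWlen w0 hw0W) ?_
    have hb : (Multiset.map (fun _ => 2*i) (W.erase w0).val).sum
        ≤ (Multiset.map List.length (W.erase w0).val).sum := by
      apply Multiset.sum_map_le_sum_map
      intro w hw
      exact hrest w (Finset.mem_def.mpr hw)
    calc (m-1) * (2*i) = (Multiset.map (fun _ => 2*i) (W.erase w0).val).sum := by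
          rw [Multiset.map_const', Multiset.sum_replicate]
          have e2 : Multiset.card (W.erase w0).val = (W.erase w0).card := rfl
          rw [e2, Finset.card_erase_of_mem hw0W, smul_eq_mul]
    _ ≤ _ := hb
  have hsumlt : (C'.val.map List.length).sum < (C.val.map List.length).sum := by
    rw [hms, hms', Multiset.sum_add, Multiset.sum_add]
    omega
  -- sums of nthLen over range n
  have hlenC' : (lenSeq C').length = n := by
    unfold lenSeq
    rw [Multiset.length_sort, Multiset.card_map]
    exact hC'card
  have hlenC : (lenSeq C).length = n := by
    unfold lenSeq
    rw [Multiset.length_sort, Multiset.card_map]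
    exact hcard
  have hsum1 : ∑ j ∈ Finset.range n, nthLen C' j = (C'.val.map List.length).sum := by
    have h0 := sum_getD_range (lenSeq C')
    rw [hlenC'] at h0
    have h1 : (lenSeq C').sum = (C'.val.map List.length).sum := by
      conv_lhs => rw [← Multiset.sum_coe]
      unfold lenSeq
      rw [Multiset.sort_eq]
    rw [← h1]
    exact h0
  have hsum2 : ∑ j ∈ Finset.range n, nthLen C j = (C.val.map List.length).sum := by
    have h0 := sum_getD_range (lenSeq C)
    rw [hlenC] at h0
    have h1 : (lenSeq C).sum = (C.val.map List.length).sum := by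
      conv_lhs => rw [← Multiset.sum_coe]
      unfold lenSeq
      rw [Multiset.sort_eq]
    rw [← h1]
    exact h0
  have hstrict : ∃ j ∈ Finset.range n, nthLen C' j < nthLen C j := by
    by_contra hcon
    push_neg at hcon
    have heq : ∑ j ∈ Finset.range n, nthLen C' j = ∑ j ∈ Finset.range n, nthLen C j :=
      Finset.sum_congr rfl (fun j hj => le_antisymm (hpoint j) (hcon j hj))
    rw [hsum1, hsum2] at heq
    omega
  obtain ⟨j0, hj0, hj0lt⟩ := hstrict
  have hexp : expLen p n C' < expLen p n C := by
    unfold expLen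
    apply Finset.sum_lt_sum
    · intro j hj
      have hpj : 0 < p j := hp.2.1 j (Finset.mem_range.mp hj)
      exact mul_le_mul_of_nonneg_left (by exact_mod_cast hpoint j) (le_of_lt hpj)
    · refine ⟨j0, hj0, ?_⟩
      have hpj : 0 < p j0 := hp.2.1 j0 (Finset.mem_range.mp hj0)
      exact mul_lt_mul_of_pos_left (by exact_mod_cast hj0lt) hpj
  exact absurd (hopt C' hC'SFF hC'card) (not_le.mpr hexp)
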